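/- The set of pairs (A,B) ∈ SO(3)×SO(3) for which the exponential Diophantine property fails is residual: for a Baire-generic (comeager) set of pairs (A,B), for every constant D > 0 there exist infinitely many n and reduced words W_n of length n in A, B, A⁻¹, B⁻¹ with 0 < ‖W_n − Id‖ < D^{−n}. -/

import Mathlib

open Matrix MeasureTheory

noncomputable instance : MeasurableSpace (Matrix (Fin 3) (Fin 3) ℝ) :=
  MeasurableSpace.pi (m := fun _ : Fin 3 => MeasurableSpace.pi)

/-- `SO(3)`: the subgroup of the real orthogonal group of elements of determinant one. -/
noncomputable def SO3 : Subgroup (Matrix.unitaryGroup (Fin 3) ℝ) where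
  carrier := {A | (A : Matrix (Fin 3) (Fin 3) ℝ).det = 1}
  mul_mem' := by
    intro a b ha hb
    simp only [Set.mem_setOf_eq, Submonoid.coe_mul, Matrix.det_mul] at *
    rw [ha, hb, mul_one]
  one_mem' := by simp
  inv_mem' := by
    intro a ha
    simp only [Set.mem_setOf_eq] at *
    have : ((a⁻¹ : Matrix.unitaryGroup (Fin 3) ℝ) : Matrix (Fin 3) (Fin 3) ℝ)
        = star (a : Matrix (Fin 3) (Fin 3) ℝ) := rfl
    rw [this, Matrix.star_eq_conjTranspose, Matrix.det_conjTranspose, ha, star_one]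

/-- The underlying `3 × 3` matrix of an element of `SO(3)`. -/
noncomputable def SO3.mat (a : SO3) : Matrix (Fin 3) (Fin 3) ℝ := a.1.1

/-- The length `|I_m| = Σ_p (|s_p| + |r_p|)` of the word with multi-index
`I_m = ((s_1, r_1), …, (s_m, r_m))`. -/
def wordLen (l : List (ℤ × ℤ)) : ℕ := (l.map fun p => p.1.natAbs + p.2.natAbs).sum

/-- The word `A^{s_1} B^{r_1} ⋯ A^{s_m} B^{r_m}`. -/
noncomputable def wordEval {G : Type*} [Group G] (A B : G) (l : List (ℤ × ℤ)) : G :=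
  (l.map fun p => A ^ p.1 * B ^ p.2).prod

attribute [local instance] Matrix.frobeniusNormedAddCommGroup

set_option maxHeartbeats 1000000

section Aux
open Real
noncomputable def rot (θ : ℝ) : Matrix (Fin 3) (Fin 3) ℝ :=
  !![1,0,0; 0, Real.cos θ, -Real.sin θ; 0, Real.sin θ, Real.cos θ]

lemma sin_int_two_pi (k : ℤ) : Real.sin (k * (2 * π)) = 0 := by
  have : (k : ℝ) * (2 * π) = (2 * k : ℤ) * π := by push_cast; ring
  rw [this, Real.sin_int_mul_pi]

lemma rot_mul (s t : ℝ) : rot s * rot t = rot (s + t) := by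
  ext i j
  fin_cases i <;> fin_cases j <;>
    simp [rot, Matrix.mul_apply, Fin.sum_univ_three, Real.cos_add, Real.sin_add,
      Matrix.vecHead, Matrix.vecTail] <;> ring

lemma rot_zero : rot 0 = 1 := by
  ext i j; fin_cases i <;> fin_cases j <;>
    simp [rot, Matrix.one_apply, Matrix.vecHead, Matrix.vecTail]

lemma rot_pow (t : ℝ) (n : ℕ) : (rot t) ^ n = rot (n * t) := by
  induction n with
  | zero => simp [rot_zero]
  | succ k ih => rw [pow_succ, ih, rot_mul]; congr 1; push_cast; ring

lemma rot_transpose (t : ℝ) : (rot t)ᵀ = rot (-t) := by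
  ext i j; fin_cases i <;> fin_cases j <;>
    simp [rot, Matrix.vecHead, Matrix.vecTail]

lemma rot_orth (t : ℝ) : (rot t)ᵀ * rot t = 1 := by
  rw [rot_transpose, rot_mul]; simp [rot_zero]

lemma rot_det (t : ℝ) : (rot t).det = 1 := by
  simp [rot, Matrix.det_fin_three, Matrix.vecHead, Matrix.vecTail]
  nlinarith [Real.sin_sq_add_cos_sq t]

lemma rot_int_two_pi (k : ℤ) : rot (k * (2 * π)) = 1 := by
  ext i j; fin_cases i <;> fin_cases j <;>
    simp [rot, Matrix.one_apply, Real.cos_int_mul_two_pi, sin_int_two_pi,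
      Matrix.vecHead, Matrix.vecTail]

lemma rot_ne_one {t : ℝ} (h : Real.cos t ≠ 1) : rot t ≠ 1 := by
  intro he
  apply h
  have := congrFun (congrFun he 1) 1
  simpa [rot, Matrix.one_apply, Matrix.vecHead, Matrix.vecTail] using this

lemma rot_continuous : Continuous rot := by
  apply continuous_matrix
  intro i j
  fin_cases i <;> fin_cases j <;>
    simp [rot, Matrix.vecHead, Matrix.vecTail] <;> fun_prop

lemma exists_angle {a c : ℝ} (h : a * a + c * c = 1) :
    ∃ θ : ℝ, Real.cos θ = a ∧ Real.sin θ = c := by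
  have hz : (⟨a, c⟩ : ℂ) ≠ 0 := by
    intro h0
    rw [Complex.ext_iff] at h0
    simp only [Complex.zero_re, Complex.zero_im] at h0
    nlinarith [h0.1, h0.2]
  have habs : ‖(⟨a, c⟩ : ℂ)‖ = 1 := by
    rw [Complex.norm_def, Complex.normSq_apply, h, Real.sqrt_one]
  refine ⟨Complex.arg ⟨a, c⟩, ?_, ?_⟩
  · rw [Complex.cos_arg hz, habs]; simp
  · rw [Complex.sin_arg, habs]; simp

lemma exists_basis (u : EuclideanSpace ℝ (Fin 3)) (hu : ‖u‖ = 1) :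
    ∃ b : OrthonormalBasis (Fin 3) ℝ (EuclideanSpace ℝ (Fin 3)), b 0 = u := by
  have hcard : Module.finrank ℝ (EuclideanSpace ℝ (Fin 3)) = Fintype.card (Fin 3) := by
    simp [finrank_euclideanSpace]
  have horth : Orthonormal ℝ (Set.restrict {(0:Fin 3)} fun _ => u) := by
    constructor
    · intro i; exact hu
    · intro i j hij
      exact absurd (Subtype.ext (by
        have hi := i.2; have hj := j.2
        simp only [Set.mem_singleton_iff] at hi hj
        rw [hi, hj])) hij
  obtain ⟨b, hb⟩ := Orthonormal.exists_orthonormalBasis_extension_of_card_eq hcard horth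
  exact ⟨b, hb 0 rfl⟩

lemma det_sub_one_eq_zero {A : Matrix (Fin 3) (Fin 3) ℝ}
    (h : Aᵀ * A = 1) (hd : A.det = 1) : (A - 1).det = 0 := by
  have h1 : (A - 1).det = Aᵀ.det * (A - 1).det := by
    rw [Matrix.det_transpose, hd, one_mul]
  have h2 : Aᵀ * (A - 1) = (1 - A)ᵀ := by
    rw [Matrix.mul_sub, h, Matrix.mul_one, Matrix.transpose_sub, Matrix.transpose_one]
  have h3 : (A - 1).det = (1 - A).det := by
    rw [h1, ← Matrix.det_mul, h2, Matrix.det_transpose]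
  have h4 : (1 - A) = -(A - 1) := by rw [neg_sub]
  rw [h4, Matrix.det_neg] at h3
  simp at h3
  linarith

lemma exists_eigvec {A : Matrix (Fin 3) (Fin 3) ℝ}
    (h : Aᵀ * A = 1) (hd : A.det = 1) : ∃ v : Fin 3 → ℝ, v ≠ 0 ∧ A.mulVec v = v := by
  obtain ⟨v, hv, hv0⟩ := (Matrix.exists_mulVec_eq_zero_iff).2 (det_sub_one_eq_zero h hd)
  exact ⟨v, hv, by rwa [Matrix.sub_mulVec, Matrix.one_mulVec, sub_eq_zero] at hv0⟩

/-- Euler's rotation theorem, normal form. -/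
lemma euler {A : Matrix (Fin 3) (Fin 3) ℝ} (h : Aᵀ * A = 1) (hd : A.det = 1) :
    ∃ (P : Matrix (Fin 3) (Fin 3) ℝ) (θ : ℝ), Pᵀ * P = 1 ∧ A = P * rot θ * Pᵀ := by
  obtain ⟨v, hv, hAv⟩ := exists_eigvec h hd
  set vE : EuclideanSpace ℝ (Fin 3) := WithLp.toLp 2 v with hvE
  have hvE0 : vE ≠ 0 := by
    intro h0; exact hv (by simpa [hvE] using congrArg WithLp.ofLp h0)
  set u : EuclideanSpace ℝ (Fin 3) := ‖vE‖⁻¹ • vE with hu_def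
  have hu : ‖u‖ = 1 := by
    rw [hu_def, norm_smul, norm_inv, norm_norm]
    field_simp [norm_ne_zero_iff.mpr hvE0]
  have hAu : A *ᵥ u = u := by
    rw [hu_def]
    show A *ᵥ (‖vE‖⁻¹ • (vE : Fin 3 → ℝ)) = ‖vE‖⁻¹ • (vE : Fin 3 → ℝ)
    rw [Matrix.mulVec_smul, hAv]
  obtain ⟨b, hb0⟩ := exists_basis u hu
  have hON : ∀ i j, ∑ k : Fin 3, b i k * b j k = if i = j then 1 else 0 := by
    intro i j
    have := orthonormal_iff_ite.mp b.orthonormal i j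
    rw [PiLp.inner_apply] at this
    simpa [mul_comm] using this
  set P : Matrix (Fin 3) (Fin 3) ℝ := Matrix.of fun i j => b j i with hP_def
  have hP : Pᵀ * P = 1 := by
    ext i j
    simp only [Matrix.mul_apply, Matrix.transpose_apply, hP_def, Matrix.of_apply,
      Matrix.one_apply]
    exact hON i j
  have hPP : P * Pᵀ = 1 := mul_eq_one_comm.mp hP
  set M : Matrix (Fin 3) (Fin 3) ℝ := Pᵀ * A * P with hM_def
  have hMentry : ∀ i j, M i j = ∑ k, b i k * (A *ᵥ (b j)) k := by
    intro i j
    rw [hM_def]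
    simp only [Matrix.mul_apply, Matrix.transpose_apply, hP_def, Matrix.of_apply,
      Matrix.mulVec, dotProduct, Fin.sum_univ_three]
    ring
  have hMc0 : ∀ i, M i 0 = if i = 0 then 1 else 0 := by
    intro i
    rw [hMentry i 0, hb0, hAu, ← hb0]
    exact hON i 0
  have hMorth : Mᵀ * M = 1 := by
    rw [hM_def, Matrix.transpose_mul, Matrix.transpose_mul, Matrix.transpose_transpose]
    calc (Pᵀ * (Aᵀ * P))ᵀᵀ * (Pᵀ * A * P) = (Pᵀ * (Aᵀ * P)) * (Pᵀ * A * P) := by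
          rw [Matrix.transpose_transpose]
      _ = Pᵀ * Aᵀ * (P * Pᵀ) * A * P := by noncomm_ring
      _ = Pᵀ * (Aᵀ * A) * P := by rw [hPP]; noncomm_ring
      _ = 1 := by rw [h, Matrix.mul_one, hP]
  have hMMt : M * Mᵀ = 1 := mul_eq_one_comm.mp hMorth
  have hPdet : P.det * P.det = 1 := by
    have h1 : (Pᵀ * P).det = 1 := by rw [hP, Matrix.det_one]
    rw [Matrix.det_mul, Matrix.det_transpose] at h1
    exact h1
  have hMdet : M.det = 1 := by
    rw [hM_def, Matrix.det_mul, Matrix.det_mul, Matrix.det_transpose, hd]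
    linear_combination hPdet
  have hM00 : M 0 0 = 1 := by simpa using hMc0 0
  have hM10 : M 1 0 = 0 := by simpa using hMc0 1
  have hM20 : M 2 0 = 0 := by simpa using hMc0 2
  have hrow0 : M 0 1 = 0 ∧ M 0 2 = 0 := by
    have h00 := congrFun (congrFun hMMt 0) 0
    simp only [Matrix.mul_apply, Matrix.transpose_apply, Fin.sum_univ_three,
      Matrix.one_apply_eq] at h00
    rw [hM00] at h00
    constructor <;> nlinarith [sq_nonneg (M 0 1), sq_nonneg (M 0 2)]
  obtain ⟨hM01, hM02⟩ := hrow0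
  have hcol1 := congrFun (congrFun hMorth 1) 1
  simp only [Matrix.mul_apply, Matrix.transpose_apply, Fin.sum_univ_three,
    Matrix.one_apply, if_pos rfl, if_true] at hcol1
  have hcol12 := congrFun (congrFun hMorth 1) 2
  simp only [Matrix.mul_apply, Matrix.transpose_apply, Fin.sum_univ_three,
    Matrix.one_apply] at hcol12
  rw [if_neg (by decide : (1 : Fin 3) ≠ 2)] at hcol12
  rw [hM01] at hcol1
  rw [hM01, hM02] at hcol12
  have hsq : M 1 1 * M 1 1 + M 2 1 * M 2 1 = 1 := by linarith [hcol1]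
  have hort : M 1 1 * M 1 2 + M 2 1 * M 2 2 = 0 := by linarith [hcol12]
  have hdet3 : M 1 1 * M 2 2 - M 1 2 * M 2 1 = 1 := by
    have hD := hMdet
    rw [Matrix.det_fin_three, hM01, hM02, hM10, hM20, hM00] at hD
    linarith [hD]
  have hd22 : M 2 2 = M 1 1 := by
    linear_combination M 1 1 * hdet3 + M 2 1 * hort - M 2 2 * hsq
  have hd12 : M 1 2 = - M 2 1 := by
    linear_combination M 1 1 * hort - M 2 1 * hdet3 - M 1 2 * hsq
  obtain ⟨θ, hcos, hsin⟩ := exists_angle hsq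
  refine ⟨P, θ, hP, ?_⟩
  have hMrot : M = rot θ := by
    ext i j
    fin_cases i <;> fin_cases j <;>
      simp [rot, hM00, hM01, hM02, hM10, hM20, hcos, hsin, hd22, hd12,
        Matrix.vecHead, Matrix.vecTail]
  rw [← hMrot, hM_def]
  calc A = (P * Pᵀ) * A * (P * Pᵀ) := by rw [hPP, Matrix.one_mul, Matrix.mul_one]
    _ = P * (Pᵀ * A * P) * Pᵀ := by noncomm_ring

lemma matpow_cont (n : ℕ) : Continuous (fun A : Matrix (Fin 3) (Fin 3) ℝ => A ^ n) := by
  induction n with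
  | zero => simpa using continuous_const
  | succ k ih => simpa [pow_succ] using ih.matrix_mul continuous_id

lemma conj_pow' {P A : Matrix (Fin 3) (Fin 3) ℝ} (hPP : P * Pᵀ = 1) (n : ℕ) :
    (P * A * Pᵀ) ^ n = P * (A ^ n) * Pᵀ := by
  induction n with
  | zero => simpa [pow_zero] using hPP.symm
  | succ k ih =>
      rw [pow_succ, ih, pow_succ]
      calc P * A ^ k * Pᵀ * (P * A * Pᵀ) = P * A ^ k * (Pᵀ * P) * A * Pᵀ := by noncomm_ring
        _ = P * (A ^ k * A) * Pᵀ := by rw [mul_eq_one_comm.mp hPP]; noncomm_ring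
lemma SO3.mat_mul (a b : SO3) : SO3.mat (a * b) = SO3.mat a * SO3.mat b := rfl
lemma SO3.mat_one : SO3.mat 1 = 1 := rfl
lemma SO3.mat_inv (a : SO3) : SO3.mat a⁻¹ = star (SO3.mat a) := rfl
lemma SO3.mat_pow (a : SO3) (n : ℕ) : SO3.mat (a ^ n) = SO3.mat a ^ n := by
  induction n with
  | zero => simp [SO3.mat_one]
  | succ k ih => rw [pow_succ, pow_succ, SO3.mat_mul, ih]

lemma SO3.mat_injective : Function.Injective SO3.mat := by
  intro a b hab
  exact Subtype.ext (Subtype.ext hab)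

lemma SO3.orth (a : SO3) : (SO3.mat a)ᵀ * SO3.mat a = 1 := by
  have := a.1.2
  rw [Matrix.mem_unitaryGroup_iff'] at this
  rwa [Matrix.star_eq_conjTranspose, Matrix.conjTranspose_eq_transpose_of_trivial] at this

lemma SO3.det_one (a : SO3) : (SO3.mat a).det = 1 := a.2

/-- Build an element of SO3 from an orthogonal matrix of determinant 1. -/
noncomputable def SO3.mk (A : Matrix (Fin 3) (Fin 3) ℝ) (h : Aᵀ * A = 1) (hd : A.det = 1) :
    SO3 :=
  ⟨⟨A, by
    rw [Matrix.mem_unitaryGroup_iff', Matrix.star_eq_conjTranspose,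
      Matrix.conjTranspose_eq_transpose_of_trivial]
    exact h⟩, hd⟩

lemma SO3.mk_mat (A h hd) : SO3.mat (SO3.mk A h hd) = A := rfl

-- continuity of mat
lemma SO3.continuous_mat : Continuous (SO3.mat) :=
  continuous_subtype_val.comp continuous_subtype_val

end Aux
section Aux2
open Real

/-- SO3 element from orthogonal conjugation of a rotation. -/
noncomputable def rotSO3 (P : Matrix (Fin 3) (Fin 3) ℝ) (hP : Pᵀ * P = 1) (t : ℝ) : SO3 :=
  SO3.mk (P * rot t * Pᵀ)
    (by
      have hPP : P * Pᵀ = 1 := mul_eq_one_comm.mp hP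
      calc (P * rot t * Pᵀ)ᵀ * (P * rot t * Pᵀ)
          = P * ((rot t)ᵀ * (Pᵀ * P) * rot t) * Pᵀ := by
            rw [Matrix.transpose_mul, Matrix.transpose_mul, Matrix.transpose_transpose]
            noncomm_ring
        _ = 1 := by rw [hP, Matrix.mul_one, rot_orth, Matrix.mul_one, hPP])
    (by
      have hPdet : P.det * P.det = 1 := by
        have h1 : (Pᵀ * P).det = 1 := by rw [hP, Matrix.det_one]
        rwa [Matrix.det_mul, Matrix.det_transpose] at h1
      rw [Matrix.det_mul, Matrix.det_mul, Matrix.det_transpose, rot_det]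
      linear_combination hPdet)

lemma rotSO3_mat (P hP t) : SO3.mat (rotSO3 P hP t) = P * rot t * Pᵀ := rfl

lemma rotSO3_pow_mat (P : Matrix (Fin 3) (Fin 3) ℝ) (hP : Pᵀ * P = 1) (t : ℝ) (n : ℕ) :
    SO3.mat ((rotSO3 P hP t) ^ n) = P * rot (n * t) * Pᵀ := by
  rw [SO3.mat_pow, rotSO3_mat, conj_pow' (mul_eq_one_comm.mp hP), rot_pow]

lemma rotSO3_continuous (P : Matrix (Fin 3) (Fin 3) ℝ) (hP : Pᵀ * P = 1) :
    Continuous (rotSO3 P hP) := by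
  apply Continuous.subtype_mk
  apply Continuous.subtype_mk
  exact (continuous_const.matrix_mul rot_continuous).matrix_mul continuous_const

/-- Core approximation lemma: near any element of SO3 there is a torsion element `x`
(of some period `k ≥ 1`), and elements `y` whose `k`-th power is arbitrarily close to,
but distinct from, the identity. -/
lemma approx (a : SO3) {ε : ℝ} (hε : 0 < ε) :
    ∃ (k : ℕ) (x : SO3), 1 ≤ k ∧ dist x a < ε ∧ x ^ k = 1 ∧
      ∀ c > (0:ℝ), ∃ y : SO3, dist y a < ε ∧
        0 < ‖SO3.mat (y ^ k) - 1‖ ∧ ‖SO3.mat (y ^ k) - 1‖ < c := by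
  obtain ⟨P, θ, hP, hA⟩ := euler (SO3.orth a) (SO3.det_one a)
  set f : ℝ → SO3 := rotSO3 P hP with hf
  have hfθ : f θ = a := SO3.mat_injective (by rw [hf, rotSO3_mat, hA])
  have hcont : ContinuousAt f θ := (rotSO3_continuous P hP).continuousAt
  replace hcont := Metric.continuousAt_iff.mp hcont
  obtain ⟨δ, hδ, hδf⟩ := hcont ε hε
  -- choose denominator k with 2π/k < δ/2
  obtain ⟨k₀, hk₀⟩ := exists_nat_gt ((2 * π) / (δ / 2))
  set k : ℕ := k₀ + 1 with hk
  have hkpos : (0:ℝ) < k := by positivity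
  have h2pik : (2 * π) / k < δ / 2 := by
    rw [div_lt_iff₀ hkpos]
    have hklarge : (2 * π) / (δ / 2) < k := by
      have : (k₀ : ℝ) ≤ k := by exact_mod_cast Nat.le_succ k₀
      linarith
    rw [div_lt_iff₀ (by linarith : (0:ℝ) < δ / 2)] at hklarge
    linarith
  -- the rational angle
  set j : ℤ := round (θ * k / (2 * π)) with hj
  set t₀ : ℝ := (j * (2 * π)) / k with ht₀
  have hpi : (0:ℝ) < π := Real.pi_pos
  have ht₀θ : |t₀ - θ| < δ / 2 := by
    have hr := abs_sub_round (θ * k / (2 * π))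
    have hkne : (k:ℝ) ≠ 0 := ne_of_gt hkpos
    have h1 : t₀ - θ = -((θ * k / (2 * π) - j) * ((2 * π) / k)) := by
      rw [ht₀]
      have hpne : (2 * π : ℝ) ≠ 0 := by positivity
      field_simp
      ring
    rw [h1, abs_neg, abs_mul]
    have h2 : |(2 * π) / k| = (2 * π) / k := by
      rw [abs_of_pos]; positivity
    rw [h2]
    have h3 : |θ * k / (2 * π) - j| ≤ 1 / 2 := by
      have := abs_sub_round (θ * k / (2 * π))
      simpa [abs_sub_comm] using this
    calc |θ * k / (2 * π) - ↑j| * (2 * π / ↑k) ≤ (1/2) * (2 * π / k) := by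
          apply mul_le_mul_of_nonneg_right h3; positivity
      _ < δ / 2 := by nlinarith [h2pik]
  have hkt₀ : (k : ℝ) * t₀ = j * (2 * π) := by
    rw [ht₀]; field_simp
  have hxk : f t₀ ^ k = 1 := by
    apply SO3.mat_injective
    rw [hf, rotSO3_pow_mat, hkt₀, rot_int_two_pi, Matrix.mul_one,
      mul_eq_one_comm.mp hP, SO3.mat_one]
  have hxa : dist (f t₀) a < ε := by
    rw [← hfθ]
    apply hδf
    rw [Real.dist_eq]
    linarith [ht₀θ]
  refine ⟨k, f t₀, Nat.le_add_left 1 k₀, hxa, hxk, ?_⟩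
  -- the perturbed elements
  intro c hc
  -- continuity of t ↦ mat ((f t)^k) at t₀, value 1
  have hGcont : ContinuousAt (fun t => P * rot ((k:ℝ) * t) * Pᵀ) t₀ := by
    apply Continuous.continuousAt
    exact (continuous_const.matrix_mul
      (rot_continuous.comp (continuous_const.mul continuous_id))).matrix_mul continuous_const
  replace hGcont := Metric.continuousAt_iff.mp hGcont
  obtain ⟨δ₂, hδ₂, hδ₂G⟩ := hGcont c hc
  -- choose the perturbation size
  set s : ℝ := min (min (δ₂ / 2) (δ / 4)) (π / k) with hs
  have hspos : 0 < s := by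
    apply lt_min (lt_min (by linarith) (by linarith))
    positivity
  have hsk : (k:ℝ) * s ≤ π := by
    have : s ≤ π / k := min_le_right _ _
    rw [le_div_iff₀ hkpos] at this
    linarith
  have hskpos : 0 < (k:ℝ) * s := by positivity
  refine ⟨f (t₀ + s), ?_, ?_, ?_⟩
  · -- distance to a
    rw [← hfθ]
    apply hδf
    rw [Real.dist_eq]
    have h1 : s ≤ δ / 4 := le_trans (min_le_left _ _) (min_le_right _ _)
    have : |t₀ + s - θ| ≤ |t₀ - θ| + |s| := by
      have := abs_add_le (t₀ - θ) s
      simpa [add_sub_right_comm] using this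
    rw [abs_of_pos hspos] at this
    linarith [ht₀θ]
  · -- nonzero
    have hmat : SO3.mat (f (t₀ + s) ^ k) = P * rot ((k:ℝ) * (t₀ + s)) * Pᵀ := by
      rw [hf, rotSO3_pow_mat]
    have hrotform : rot ((k:ℝ) * (t₀ + s)) = rot ((k:ℝ) * s) := by
      have : (k:ℝ) * (t₀ + s) = j * (2 * π) + (k:ℝ) * s := by
        rw [mul_add, hkt₀]
      rw [this, ← rot_mul, rot_int_two_pi, one_mul]
    have hne : SO3.mat (f (t₀ + s) ^ k) ≠ 1 := by
      rw [hmat, hrotform]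
      intro hcontra
      have h1 : rot ((k:ℝ) * s) = Pᵀ * P := by
        have := congrArg (fun M => Pᵀ * M * P) hcontra
        calc rot ((k:ℝ) * s) = (Pᵀ * P) * rot ((k:ℝ) * s) * (Pᵀ * P) := by
              rw [hP, Matrix.one_mul, Matrix.mul_one]
          _ = Pᵀ * (P * rot ((k:ℝ) * s) * Pᵀ) * P := by noncomm_ring
          _ = Pᵀ * 1 * P := by rw [hcontra]
          _ = Pᵀ * P := by rw [Matrix.mul_one]
      rw [hP] at h1
      have h2 : Real.cos ((k:ℝ) * s) = 1 := by
        have := congrFun (congrFun h1 1) 1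
        simpa [rot, Matrix.one_apply, Matrix.vecHead, Matrix.vecTail] using this
      rw [Real.cos_eq_one_iff_of_lt_of_lt (by linarith) (by linarith)] at h2
      linarith
    have := sub_ne_zero.mpr hne
    simpa [norm_pos_iff] using this
  · -- smallness
    have hmat : SO3.mat (f (t₀ + s) ^ k) = P * rot ((k:ℝ) * (t₀ + s)) * Pᵀ := by
      rw [hf, rotSO3_pow_mat]
    have h1 : P * rot ((k:ℝ) * t₀) * Pᵀ = 1 := by
      rw [hkt₀, rot_int_two_pi, Matrix.mul_one, mul_eq_one_comm.mp hP]
    have h2 := hδ₂G (x := t₀ + s) (by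
      rw [Real.dist_eq]
      have : s ≤ δ₂ / 2 := le_trans (min_le_left _ _) (min_le_left _ _)
      rw [abs_of_pos (by linarith : (0:ℝ) < t₀ + s - t₀)]
      linarith)
    rw [dist_eq_norm, h1] at h2
    rw [hmat]
    exact h2
end Aux2

section Aux3
open Real

lemma cont_zpow (z : ℤ) : Continuous fun a : SO3 => SO3.mat (a ^ z) := by
  cases z with
  | ofNat n =>
      have h : ∀ a : SO3, SO3.mat (a ^ (Int.ofNat n)) = (SO3.mat a) ^ n := fun a => by
        rw [Int.ofNat_eq_coe, zpow_natCast, SO3.mat_pow]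
      simp only [h]
      exact (matpow_cont n).comp SO3.continuous_mat
  | negSucc n =>
      have h : ∀ a : SO3, SO3.mat (a ^ (Int.negSucc n)) = star ((SO3.mat a) ^ (n+1)) :=
        fun a => by rw [zpow_negSucc, SO3.mat_inv, SO3.mat_pow]
      simp only [h]
      exact continuous_star.comp ((matpow_cont (n+1)).comp SO3.continuous_mat)

lemma cont_word (l : List (ℤ × ℤ)) :
    Continuous fun p : SO3 × SO3 => SO3.mat (wordEval p.1 p.2 l) := by
  induction l with
  | nil =>
      have h : ∀ p : SO3 × SO3, SO3.mat (wordEval p.1 p.2 []) = 1 := fun p => rfl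
      simp only [h]
      exact continuous_const
  | cons q l ih =>
      have h : ∀ p : SO3 × SO3, SO3.mat (wordEval p.1 p.2 (q :: l))
          = SO3.mat (p.1 ^ q.1) * SO3.mat (p.2 ^ q.2) * SO3.mat (wordEval p.1 p.2 l) := by
        intro p
        rw [show wordEval p.1 p.2 (q :: l) = (p.1 ^ q.1 * p.2 ^ q.2) * wordEval p.1 p.2 l from by
          simp [wordEval], SO3.mat_mul, SO3.mat_mul]
      simp only [h]
      exact (((cont_zpow q.1).comp continuous_fst).matrix_mul
        ((cont_zpow q.2).comp continuous_snd)).matrix_mul ih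

/-- The basic open dense sets. -/
def U (m N : ℕ) : Set (SO3 × SO3) :=
  {p | ∃ l : List (ℤ × ℤ), l ≠ [] ∧ (∀ q ∈ l, q.1 ≠ 0 ∧ q.2 ≠ 0) ∧ N ≤ wordLen l ∧
      0 < ‖SO3.mat (wordEval p.1 p.2 l) - 1‖ ∧
      ‖SO3.mat (wordEval p.1 p.2 l) - 1‖ < (m + 1 : ℝ) ^ (-(wordLen l : ℝ))}

lemma isOpen_U (m N : ℕ) : IsOpen (U m N) := by
  have hU : U m N = ⋃ (l : List (ℤ × ℤ))
      (_ : l ≠ [] ∧ (∀ q ∈ l, q.1 ≠ 0 ∧ q.2 ≠ 0) ∧ N ≤ wordLen l),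
      (fun p : SO3 × SO3 => ‖SO3.mat (wordEval p.1 p.2 l) - 1‖) ⁻¹'
        (Set.Ioo 0 ((m + 1 : ℝ) ^ (-(wordLen l : ℝ)))) := by
    ext p
    simp only [U, Set.mem_setOf_eq, Set.mem_iUnion, Set.mem_preimage, Set.mem_Ioo]
    tauto
  rw [hU]
  exact isOpen_iUnion fun l => isOpen_iUnion fun _ =>
    (((cont_word l).sub continuous_const).norm).isOpen_preimage _ isOpen_Ioo

lemma dense_U (m N : ℕ) : Dense (U m N) := by
  refine Metric.dense_iff.mpr ?_
  intro p r hr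
  obtain ⟨k, x, hk1, hxd, hxk, _⟩ := approx p.1 hr
  obtain ⟨k', _, hk'1, _, _, hpert⟩ := approx p.2 hr
  set M : ℕ := max 1 N with hM
  set n : ℕ := k * M + k' with hn
  have hnN : N ≤ n := by
    calc N ≤ M := le_max_right 1 N
      _ ≤ k * M := Nat.le_mul_of_pos_left M hk1
      _ ≤ n := Nat.le_add_right _ _
  have hc : (0:ℝ) < (m + 1 : ℝ) ^ (-(n : ℝ)) := Real.rpow_pos_of_pos (by positivity) _
  obtain ⟨y, hyd, hy0, hyc⟩ := hpert _ hc
  refine ⟨(x, y), ?_, ?_⟩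
  · rw [Metric.mem_ball, Prod.dist_eq]
    exact max_lt hxd hyd
  · refine ⟨[(((k * M : ℕ) : ℤ), ((k' : ℕ) : ℤ))], by simp, ?_, ?_, ?_⟩
    · intro q hq
      simp only [List.mem_singleton] at hq
      subst hq
      have hM1 : 1 ≤ M := le_max_left 1 N
      have hkM : 0 < k * M := Nat.mul_pos hk1 hM1
      constructor
      · simp only [ne_eq, Int.natCast_eq_zero]
        omega
      · simp only [ne_eq, Int.natCast_eq_zero]
        omega
    · -- word length
      show N ≤ wordLen [(((k * M : ℕ) : ℤ), ((k' : ℕ) : ℤ))]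
      have : wordLen [(((k * M : ℕ) : ℤ), ((k' : ℕ) : ℤ))] = n := by
        simp [wordLen, hn]
        rw [← Nat.cast_mul, Int.natAbs_natCast]
      rw [this]
      exact hnN
    · -- the norm conditions
      have hlen : wordLen [(((k * M : ℕ) : ℤ), ((k' : ℕ) : ℤ))] = n := by
        simp [wordLen, hn]
        rw [← Nat.cast_mul, Int.natAbs_natCast]
      have heval : wordEval x y [(((k * M : ℕ) : ℤ), ((k' : ℕ) : ℤ))] = y ^ k' := by
        show (x ^ ((k * M : ℕ) : ℤ) * y ^ ((k' : ℕ) : ℤ)) * 1 = y ^ k'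
        rw [mul_one, zpow_natCast, zpow_natCast, pow_mul, hxk, one_pow, one_mul]
      rw [hlen]
      show 0 < ‖SO3.mat (wordEval x y _) - 1‖ ∧ _
      rw [show wordEval (x, y).1 (x, y).2 [(((k * M : ℕ) : ℤ), ((k' : ℕ) : ℤ))] = y ^ k' from heval]
      exact ⟨hy0, hyc⟩
end Aux3

theorem stmt_17 :
    {p : SO3 × SO3 | ∀ D > (0:ℝ),
      {n : ℕ | ∃ l : List (ℤ × ℤ), l ≠ [] ∧ (∀ q ∈ l, q.1 ≠ 0 ∧ q.2 ≠ 0) ∧ wordLen l = n ∧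
        0 < ‖SO3.mat (wordEval p.1 p.2 l) - 1‖ ∧
        ‖SO3.mat (wordEval p.1 p.2 l) - 1‖ < D ^ (-(n : ℝ))}.Infinite}
      ∈ residual (SO3 × SO3) := by
  have hres : (⋂ mn : ℕ × ℕ, U mn.1 mn.2) ∈ residual (SO3 × SO3) :=
    (countable_iInter_mem).2 fun mn => residual_of_dense_open (isOpen_U mn.1 mn.2)
      (dense_U mn.1 mn.2)
  refine Filter.mem_of_superset hres ?_
  intro p hp
  simp only [Set.mem_iInter] at hp
  intro D hD
  apply Set.infinite_of_forall_exists_gt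
  intro N
  obtain ⟨l, hl1, hl2, hl3, hl4, hl5⟩ := hp (⌈D⌉₊, N + 1)
  refine ⟨wordLen l, ⟨l, hl1, hl2, rfl, hl4, lt_of_lt_of_le hl5 ?_⟩, by omega⟩
  have h1 : D ≤ (⌈D⌉₊ : ℝ) + 1 := le_trans (Nat.le_ceil D) (by linarith)
  have hn0 : (0:ℝ) ≤ (wordLen l : ℝ) := Nat.cast_nonneg _
  rw [Real.rpow_neg (le_of_lt hD), Real.rpow_neg (by positivity)]
  exact inv_anti₀ (Real.rpow_pos_of_pos hD _) (Real.rpow_le_rpow (le_of_lt hD) h1 hn0)
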